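/- Let (G,·,e,⊙) be a left group-e-semigroup. Then for every x ∈ G the inverse of e⊙x in the group (e⊙G,⊙) (whose identity is e⊙e) is e⊙x⁻¹, and moreover e⊙x⁻¹ = e⊙((e⊙x)⁻¹); that is, (e⊙x)⊙(e⊙x⁻¹) = e⊙e = (e⊙x⁻¹)⊙(e⊙x) and e⊙x⁻¹ = e⊙((e⊙x)⁻¹), where x⁻¹ and (e⊙x)⁻¹ denote inverses taken in the group (G,·). -/
import Mathlib


/-- In a left group-`e`-semigroup `(G, ·, e, ⊙)` (group identity `e = 1`),
for every `x ∈ G` the inverse of `e ⊙ x` in the group `(e ⊙ G, ⊙)` (whose identity is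
`e ⊙ e`) is `e ⊙ x⁻¹`, and moreover `e ⊙ x⁻¹ = e ⊙ ((e ⊙ x)⁻¹)`, inverses `x⁻¹` and
`(e ⊙ x)⁻¹` being taken in the group `(G, ·)`. -/
theorem stmt_6 {G : Type*} [Group G] (op : G → G → G)
    (hassoc : ∀ x y z : G, op (op x y) z = op x (op y z))
    (hjoin : ∀ x y : G, op 1 (x * y) = op 1 (op x y)) :
    ∀ x : G, (op (op 1 x) (op 1 x⁻¹) = op 1 1 ∧ op (op 1 x⁻¹) (op 1 x) = op 1 1) ∧
      op 1 x⁻¹ = op 1 (op 1 x)⁻¹ := by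
  have h1 : ∀ x : G, op (op 1 x) 1 = op 1 x := fun x => by
    rw [hassoc, ← hjoin, mul_one]
  have key : ∀ x y : G, op (op 1 x) (op 1 y) = op 1 (x * y) := fun x y => by
    rw [← hassoc, h1, hassoc, ← hjoin]
  have idem : ∀ x : G, op 1 (op 1 x) = op 1 x := fun x => by
    rw [← hjoin, one_mul]
  intro x
  refine ⟨⟨?_, ?_⟩, ?_⟩
  · rw [key, mul_inv_cancel]
  · rw [key, inv_mul_cancel]
  · calc op 1 x⁻¹ = op 1 (x⁻¹ * op 1 x * (op 1 x)⁻¹) := by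
          rw [mul_assoc, mul_inv_cancel, mul_one]
      _ = op (op 1 (x⁻¹ * op 1 x)) (op 1 (op 1 x)⁻¹) := (key _ _).symm
      _ = op (op (op 1 x⁻¹) (op 1 (op 1 x))) (op 1 (op 1 x)⁻¹) := by rw [key x⁻¹ (op 1 x)]
      _ = op (op (op 1 x⁻¹) (op 1 x)) (op 1 (op 1 x)⁻¹) := by rw [idem]
      _ = op (op 1 (x⁻¹ * x)) (op 1 (op 1 x)⁻¹) := by rw [key x⁻¹ x]
      _ = op (op 1 1) (op 1 (op 1 x)⁻¹) := by rw [inv_mul_cancel]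
      _ = op 1 (1 * (op 1 x)⁻¹) := key _ _
      _ = op 1 (op 1 x)⁻¹ := by rw [one_mul]
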